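/- EFRK(3,3) energy stability matrices: for a symmetric positive semi-definite matrix S, the matrices (2/3·I + 2/9·S)⁻¹, (3I + 2S + 2/3·S²)⁻¹, (3I + 2S + 2/3·S²)⁻¹(4I + S), (9I + 9S + 4S² + 2/3·S³)⁻¹(75/4·I + 11S + 21/2·S² + 2S³), (9I + 9S + 4S² + 2/3·S³)⁻¹(3/4·I + S + S²), and (3I + 2S + 2/3·S²)⁻¹(3/2·I + ½S) are all symmetric positive semi-definite. -/

import Mathlib

open Matrix
set_option linter.unusedSectionVars false

variable {n : Type*} [Fintype n] [DecidableEq n]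

lemma myPsdSmul {M : Matrix n n ℝ} (hM : M.PosSemidef) {c : ℝ} (hc : 0 ≤ c) :
    (c • M).PosSemidef := by
  refine PosSemidef.of_dotProduct_mulVec_nonneg ?_ (fun x => ?_)
  · unfold Matrix.IsHermitian
    rw [conjTranspose_smul, hM.1.eq]
    simp
  · rw [smul_mulVec, dotProduct_smul, smul_eq_mul]
    exact mul_nonneg hc (hM.dotProduct_mulVec_nonneg x)

lemma myPdSmul {M : Matrix n n ℝ} (hM : M.PosDef) {c : ℝ} (hc : 0 < c) :
    (c • M).PosDef := by
  refine PosDef.of_dotProduct_mulVec_pos ?_ (fun x hx => ?_)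
  · unfold Matrix.IsHermitian
    rw [conjTranspose_smul, hM.1.eq]
    simp
  · rw [smul_mulVec, dotProduct_smul, smul_eq_mul]
    exact mul_pos hc (hM.dotProduct_mulVec_pos hx)

lemma myCommuteDiagonal {d e : n → ℝ} {M : Matrix n n ℝ}
    (hde : ∀ i j, d i = d j → e i = e j) (h : Commute (diagonal d) M) :
    Commute (diagonal e) M := by
  have h' := h.eq
  ext i j
  have hij : d i * M i j = M i j * d j := by
    have := congrFun (congrFun h' i) j
    simpa [Matrix.diagonal_mul, Matrix.mul_diagonal] using this
  rw [Matrix.diagonal_mul, Matrix.mul_diagonal]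
  by_cases hM : M i j = 0
  · simp [hM]
  · have hdd : d i = d j := by
      have h0 : (d i - d j) * M i j = 0 := by
        have := hij; nlinarith [mul_comm (M i j) (d j)]
      rcases mul_eq_zero.mp h0 with h0 | h0
      · linarith
      · exact absurd h0 hM
    rw [hde i j hdd]; ring

noncomputable def mySqrt {A : Matrix n n ℝ} (hA : A.PosSemidef) : Matrix n n ℝ :=
  (hA.1.eigenvectorUnitary : Matrix n n ℝ) *
    diagonal (RCLike.ofReal ∘ Real.sqrt ∘ hA.1.eigenvalues) *
    star (hA.1.eigenvectorUnitary : Matrix n n ℝ)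

lemma myPosSemidef_sqrt {A : Matrix n n ℝ} (hA : A.PosSemidef) : (mySqrt hA).PosSemidef := by
  unfold mySqrt
  rw [star_eq_conjTranspose]
  exact (PosSemidef.diagonal (by intro i; simp [Real.sqrt_nonneg])).mul_mul_conjTranspose_same _

lemma mySqrt_mul_self {A : Matrix n n ℝ} (hA : A.PosSemidef) : mySqrt hA * mySqrt hA = A := by
  have h1 : star (hA.1.eigenvectorUnitary : Matrix n n ℝ) * (hA.1.eigenvectorUnitary : Matrix n n ℝ) = 1 :=
    (Matrix.mem_unitaryGroup_iff').mp hA.1.eigenvectorUnitary.2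
  have hspec : A = (hA.1.eigenvectorUnitary : Matrix n n ℝ) *
      diagonal (RCLike.ofReal ∘ hA.1.eigenvalues) * star (hA.1.eigenvectorUnitary : Matrix n n ℝ) :=
    hA.1.spectral_theorem
  unfold mySqrt
  conv_rhs => rw [hspec]
  simp only [Matrix.mul_assoc]
  rw [← Matrix.mul_assoc (star _) (hA.1.eigenvectorUnitary : Matrix n n ℝ), h1, Matrix.one_mul,
    ← Matrix.mul_assoc (diagonal _), diagonal_mul_diagonal]
  congr 2
  congr 1
  funext i
  simp [Real.mul_self_sqrt (hA.eigenvalues_nonneg i)]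

lemma mySqrtCommute {A B : Matrix n n ℝ} (hA : A.PosSemidef) (h : Commute A B) :
    Commute (mySqrt hA) B := by
  set V : Matrix n n ℝ := (hA.1.eigenvectorUnitary : Matrix n n ℝ) with hV
  have h1 : star V * V = 1 := by
    exact (Matrix.mem_unitaryGroup_iff').mp hA.1.eigenvectorUnitary.2
  have h2 : V * star V = 1 := by
    exact (Matrix.mem_unitaryGroup_iff).mp hA.1.eigenvectorUnitary.2
  have c1 : ∀ X : Matrix n n ℝ, star V * (V * X) = X := fun X => by
    rw [← Matrix.mul_assoc, h1, Matrix.one_mul]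
  have c2 : ∀ X : Matrix n n ℝ, V * (star V * X) = X := fun X => by
    rw [← Matrix.mul_assoc, h2, Matrix.one_mul]
  set d : n → ℝ := RCLike.ofReal ∘ hA.1.eigenvalues with hd
  set e : n → ℝ := RCLike.ofReal ∘ Real.sqrt ∘ hA.1.eigenvalues with he
  have hspec : A = V * diagonal d * star V := hA.1.spectral_theorem
  have hM : Commute (diagonal d) (star V * B * V) := by
    have h' := h.eq
    rw [hspec] at h'
    have := congrArg (fun X => star V * X * V) h'
    simp only [Matrix.mul_assoc, c1, c2, h1, h2, Matrix.mul_one] at this ⊢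
    unfold Commute SemiconjBy
    simp only [Matrix.mul_assoc, c1, c2, h1, h2, Matrix.mul_one]
    exact this
  have hE : Commute (diagonal e) (star V * B * V) := by
    refine myCommuteDiagonal (fun i j hij => ?_) hM
    have : hA.1.eigenvalues i = hA.1.eigenvalues j := RCLike.ofReal_inj.mp hij
    simp [he, this]
  have hsq : mySqrt hA = V * diagonal e * star V := rfl
  rw [hsq]
  have h'' := hE.eq
  have := congrArg (fun X => V * X * star V) h''
  unfold Commute SemiconjBy
  simp only [Matrix.mul_assoc, c1, c2, h1, h2, Matrix.mul_one] at this ⊢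
  exact this

lemma myPsdMul {A B : Matrix n n ℝ} (hA : A.PosSemidef) (hB : B.PosSemidef)
    (h : Commute A B) : (A * B).PosSemidef := by
  have hc := mySqrtCommute hA h
  have key : A * B = mySqrt hA * B * (mySqrt hA)ᴴ := by
    rw [(myPosSemidef_sqrt hA).1.eq]
    calc A * B = mySqrt hA * mySqrt hA * B := by rw [mySqrt_mul_self hA]
    _ = mySqrt hA * (mySqrt hA * B) := Matrix.mul_assoc _ _ _
    _ = mySqrt hA * (B * mySqrt hA) := by rw [hc.eq]
    _ = mySqrt hA * B * mySqrt hA := (Matrix.mul_assoc _ _ _).symm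
  rw [key]
  exact hB.mul_mul_conjTranspose_same (mySqrt hA)

lemma myCommuteInv {A B : Matrix n n ℝ} (hA : IsUnit A) (h : Commute A B) :
    Commute A⁻¹ B := by
  have hd : IsUnit A.det := (Matrix.isUnit_iff_isUnit_det A).mp hA
  unfold Commute SemiconjBy
  calc A⁻¹ * B = A⁻¹ * B * (A * A⁻¹) := by rw [Matrix.mul_nonsing_inv _ hd, Matrix.mul_one]
  _ = A⁻¹ * (B * A) * A⁻¹ := by simp only [Matrix.mul_assoc]
  _ = A⁻¹ * (A * B) * A⁻¹ := by rw [h.eq]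
  _ = A⁻¹ * A * (B * A⁻¹) := by simp only [Matrix.mul_assoc]
  _ = B * A⁻¹ := by rw [Matrix.nonsing_inv_mul _ hd, Matrix.one_mul]

lemma myPdInvMul {A B : Matrix n n ℝ} (hA : A.PosDef) (hB : B.PosSemidef)
    (h : Commute A B) : (A⁻¹ * B).PosSemidef :=
  myPsdMul hA.inv.posSemidef hB (myCommuteInv hA.isUnit h)

lemma myCommutePoly {A : Matrix n n ℝ} (a b c d e f g k : ℝ) :
    Commute (a • 1 + b • A + c • A ^ 2 + d • A ^ 3)
      (e • 1 + f • A + g • A ^ 2 + k • A ^ 3) := by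
  unfold Commute SemiconjBy
  noncomm_ring
  module

/-- EFRK(3,3) energy stability matrices: for a symmetric positive semi-definite S, the
six matrices listed below are all symmetric positive semi-definite. -/
theorem stmt_10 {N : ℕ} (S : Matrix (Fin N) (Fin N) ℝ) (hS : S.PosSemidef) :
    (((2 / 3 : ℝ) • 1 + (2 / 9 : ℝ) • S)⁻¹).PosSemidef ∧
    (((3 : ℝ) • 1 + (2 : ℝ) • S + (2 / 3 : ℝ) • S ^ 2)⁻¹).PosSemidef ∧
    (((3 : ℝ) • 1 + (2 : ℝ) • S + (2 / 3 : ℝ) • S ^ 2)⁻¹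
        * ((4 : ℝ) • 1 + S)).PosSemidef ∧
    (((9 : ℝ) • 1 + (9 : ℝ) • S + (4 : ℝ) • S ^ 2 + (2 / 3 : ℝ) • S ^ 3)⁻¹
        * ((75 / 4 : ℝ) • 1 + (11 : ℝ) • S + (21 / 2 : ℝ) • S ^ 2
            + (2 : ℝ) • S ^ 3)).PosSemidef ∧
    (((9 : ℝ) • 1 + (9 : ℝ) • S + (4 : ℝ) • S ^ 2 + (2 / 3 : ℝ) • S ^ 3)⁻¹
        * ((3 / 4 : ℝ) • 1 + S + S ^ 2)).PosSemidef ∧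
    (((3 : ℝ) • 1 + (2 : ℝ) • S + (2 / 3 : ℝ) • S ^ 2)⁻¹
        * ((3 / 2 : ℝ) • 1 + (1 / 2 : ℝ) • S)).PosSemidef := by
  have pone : (1 : Matrix (Fin N) (Fin N) ℝ).PosDef := Matrix.PosDef.one
  have pd1 : (((2 / 3 : ℝ) • 1 + (2 / 9 : ℝ) • S)).PosDef :=
    (myPdSmul pone (by norm_num)).add_posSemidef (myPsdSmul hS (by norm_num))
  have pd2 : (((3 : ℝ) • 1 + (2 : ℝ) • S + (2 / 3 : ℝ) • S ^ 2)).PosDef :=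
    ((myPdSmul pone (by norm_num)).add_posSemidef (myPsdSmul hS (by norm_num))).add_posSemidef
      (myPsdSmul (hS.pow 2) (by norm_num))
  have pd3 : (((9 : ℝ) • 1 + (9 : ℝ) • S + (4 : ℝ) • S ^ 2 + (2 / 3 : ℝ) • S ^ 3)).PosDef :=
    (((myPdSmul pone (by norm_num)).add_posSemidef (myPsdSmul hS (by norm_num))).add_posSemidef
      (myPsdSmul (hS.pow 2) (by norm_num))).add_posSemidef (myPsdSmul (hS.pow 3) (by norm_num))
  have hn1 : (((4 : ℝ) • 1 + S) : Matrix (Fin N) (Fin N) ℝ).PosSemidef :=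
    (myPsdSmul pone.posSemidef (by norm_num)).add hS
  have hn2 : (((75 / 4 : ℝ) • 1 + (11 : ℝ) • S + (21 / 2 : ℝ) • S ^ 2
      + (2 : ℝ) • S ^ 3) : Matrix (Fin N) (Fin N) ℝ).PosSemidef :=
    (((myPsdSmul pone.posSemidef (by norm_num)).add (myPsdSmul hS (by norm_num))).add
      (myPsdSmul (hS.pow 2) (by norm_num))).add (myPsdSmul (hS.pow 3) (by norm_num))
  have hn3 : (((3 / 4 : ℝ) • 1 + S + S ^ 2) : Matrix (Fin N) (Fin N) ℝ).PosSemidef :=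
    ((myPsdSmul pone.posSemidef (by norm_num)).add hS).add (hS.pow 2)
  have hn4 : (((3 / 2 : ℝ) • 1 + (1 / 2 : ℝ) • S) : Matrix (Fin N) (Fin N) ℝ).PosSemidef :=
    (myPsdSmul pone.posSemidef (by norm_num)).add (myPsdSmul hS (by norm_num))
  have hc1 : Commute ((3 : ℝ) • 1 + (2 : ℝ) • S + (2 / 3 : ℝ) • S ^ 2) ((4 : ℝ) • 1 + S) := by
    have := myCommutePoly (A := S) 3 2 (2/3) 0 4 1 0 0
    simpa using this
  have hc2 : Commute ((9 : ℝ) • 1 + (9 : ℝ) • S + (4 : ℝ) • S ^ 2 + (2 / 3 : ℝ) • S ^ 3)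
      ((75 / 4 : ℝ) • 1 + (11 : ℝ) • S + (21 / 2 : ℝ) • S ^ 2 + (2 : ℝ) • S ^ 3) :=
    myCommutePoly (A := S) 9 9 4 (2/3) (75/4) 11 (21/2) 2
  have hc3 : Commute ((9 : ℝ) • 1 + (9 : ℝ) • S + (4 : ℝ) • S ^ 2 + (2 / 3 : ℝ) • S ^ 3)
      ((3 / 4 : ℝ) • 1 + S + S ^ 2) := by
    have := myCommutePoly (A := S) 9 9 4 (2/3) (3/4) 1 1 0
    simpa using this
  have hc4 : Commute ((3 : ℝ) • 1 + (2 : ℝ) • S + (2 / 3 : ℝ) • S ^ 2)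
      ((3 / 2 : ℝ) • 1 + (1 / 2 : ℝ) • S) := by
    have := myCommutePoly (A := S) 3 2 (2/3) 0 (3/2) (1/2) 0 0
    simpa using this
  exact ⟨pd1.inv.posSemidef, pd2.inv.posSemidef, myPdInvMul pd2 hn1 hc1,
    myPdInvMul pd3 hn2 hc2, myPdInvMul pd3 hn3 hc3, myPdInvMul pd2 hn4 hc4⟩
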